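/- arXiv:1702.04705 — 2 statements merged into one kernel-verified Lean document; each statement's English description precedes it below -/
import Mathlib

section
/- Let U ⊆ ℂ be open, let u : ℂ → ℂ be complex-differentiable on U, and let Ψ : ℂ → Matrix (Fin 2) (Fin 2) ℂ be complex-differentiable (entrywise) on U with Ψ'(x) = ![![0,1],![u(x),0]] · Ψ(x) and Ψ(x) invertible for every x ∈ U. Then the matrix-valued function Λ(x) = Ψ(x)⁻¹ · σ₋ · Ψ(x) is three times complex-differentiable on U and satisfies Λ''' − 4·u·Λ' − 2·u'·Λ = 0 entrywise on U. -/
/-- Entrywise complex derivative of a matrix-valued function of one complex variable. -/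
noncomputable def matDeriv (F : ℂ → Matrix (Fin 2) (Fin 2) ℂ) (x : ℂ) :
    Matrix (Fin 2) (Fin 2) ℂ :=
  Matrix.of fun i j => deriv (fun y => F y i j) x

/-- The matrix σ₋ = ![![0,0],![1,0]]. -/
def sigmaMinus : Matrix (Fin 2) (Fin 2) ℂ := !![0, 0; 1, 0]

def Amat (u : ℂ → ℂ) (x : ℂ) : Matrix (Fin 2) (Fin 2) ℂ := !![0, 1; u x, 0]

def L1mat : Matrix (Fin 2) (Fin 2) ℂ := !![-1, 0; 0, 1]

def L2mat (u : ℂ → ℂ) (x : ℂ) : Matrix (Fin 2) (Fin 2) ℂ := !![0, -2; 2 * u x, 0]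

noncomputable def L3mat (u : ℂ → ℂ) (x : ℂ) : Matrix (Fin 2) (Fin 2) ℂ :=
  !![-4 * u x, 0; 2 * deriv u x, 4 * u x]

/-- Entrywise product rule for 2×2 matrix-valued functions. -/
lemma mulEntry (F G : ℂ → Matrix (Fin 2) (Fin 2) ℂ) (F' G' : Matrix (Fin 2) (Fin 2) ℂ)
    (x : ℂ)
    (hF : ∀ i j, HasDerivAt (fun y => F y i j) (F' i j) x)
    (hG : ∀ i j, HasDerivAt (fun y => G y i j) (G' i j) x) (i j : Fin 2) :
    HasDerivAt (fun y => (F y * G y) i j) ((F' * G x + F x * G') i j) x := by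
  have e1 : (fun y => (F y * G y) i j)
      = fun y => F y i 0 * G y 0 j + F y i 1 * G y 1 j := by
    funext y; simp [Matrix.mul_apply, Fin.sum_univ_two]
  rw [e1]
  have h : HasDerivAt (fun y => F y i 0 * G y 0 j + F y i 1 * G y 1 j) _ x :=
    ((hF i 0).mul (hG 0 j)).add ((hF i 1).mul (hG 1 j))
  convert h using 1
  simp [Matrix.mul_apply, Matrix.add_apply, Fin.sum_univ_two]
  ring

/-- Entrywise derivative of the inverse. -/
lemma invEntry (Ψ : ℂ → Matrix (Fin 2) (Fin 2) ℂ) (Ψ' : Matrix (Fin 2) (Fin 2) ℂ) (x : ℂ)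
    (h : ∀ i j, HasDerivAt (fun y => Ψ y i j) (Ψ' i j) x)
    (hx : IsUnit (Ψ x)) (hnb : ∀ᶠ y in nhds x, IsUnit (Ψ y)) :
    ∀ i j, HasDerivAt (fun y => (Ψ y)⁻¹ i j) ((-((Ψ x)⁻¹ * Ψ' * (Ψ x)⁻¹)) i j) x := by
  have hdu : IsUnit (Ψ x).det := (Matrix.isUnit_iff_isUnit_det _).mp hx
  have hdne : (Ψ x).det ≠ 0 := IsUnit.ne_zero hdu
  have hdet : DifferentiableAt ℂ (fun y => (Ψ y).det) x := by
    simp only [Matrix.det_fin_two]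
    exact ((h 0 0).differentiableAt.mul (h 1 1).differentiableAt).sub
      ((h 0 1).differentiableAt.mul (h 1 0).differentiableAt)
  have hdiff : ∀ i j, DifferentiableAt ℂ (fun y => (Ψ y)⁻¹ i j) x := by
    intro i j
    have e : (fun y => (Ψ y)⁻¹ i j) = fun y => ((Ψ y).det)⁻¹ * (Ψ y).adjugate i j := by
      funext y
      simp [Matrix.inv_def, Ring.inverse_eq_inv', Matrix.smul_apply, smul_eq_mul]
    rw [e]
    refine (hdet.inv hdne).mul ?_
    fin_cases i <;> fin_cases j <;> simp [Matrix.adjugate_fin_two] <;>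
      first
        | exact (h 0 0).differentiableAt
        | exact (h 0 1).differentiableAt
        | exact (h 1 0).differentiableAt
        | exact (h 1 1).differentiableAt
        | exact (h 0 0).differentiableAt.neg
        | exact (h 0 1).differentiableAt.neg
        | exact (h 1 0).differentiableAt.neg
        | exact (h 1 1).differentiableAt.neg
  set G' : Matrix (Fin 2) (Fin 2) ℂ :=
    Matrix.of fun i j => deriv (fun y => (Ψ y)⁻¹ i j) x with hG'
  have hG : ∀ i j, HasDerivAt (fun y => (Ψ y)⁻¹ i j) (G' i j) x :=
    fun i j => (hdiff i j).hasDerivAt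
  have hprod : ∀ i j, HasDerivAt (fun y => ((Ψ y)⁻¹ * Ψ y) i j)
      ((G' * Ψ x + (Ψ x)⁻¹ * Ψ') i j) x :=
    mulEntry _ _ _ _ x hG h
  have hzero : ∀ i j, (G' * Ψ x + (Ψ x)⁻¹ * Ψ') i j = 0 := by
    intro i j
    have hev : (fun y => ((Ψ y)⁻¹ * Ψ y) i j) =ᶠ[nhds x] (fun _ => (1 : Matrix (Fin 2) (Fin 2) ℂ) i j) := by
      filter_upwards [hnb] with y hy
      rw [Matrix.nonsing_inv_mul _ ((Matrix.isUnit_iff_isUnit_det _).mp hy)]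
    have h1 : HasDerivAt (fun _ : ℂ => (1 : Matrix (Fin 2) (Fin 2) ℂ) i j)
        ((G' * Ψ x + (Ψ x)⁻¹ * Ψ') i j) x :=
      (hprod i j).congr_of_eventuallyEq hev.symm
    exact h1.unique (hasDerivAt_const x _)
  have hmat : G' * Ψ x + (Ψ x)⁻¹ * Ψ' = 0 := by
    ext i j; simpa using hzero i j
  have h2 : G' * Ψ x = -((Ψ x)⁻¹ * Ψ') := eq_neg_of_add_eq_zero_left hmat
  have h3 : G' = -((Ψ x)⁻¹ * Ψ' * (Ψ x)⁻¹) := by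
    have h4 : G' * Ψ x * (Ψ x)⁻¹ = G' := by
      rw [Matrix.mul_assoc, Matrix.mul_nonsing_inv _ hdu, Matrix.mul_one]
    rw [← h4, h2, Matrix.neg_mul, Matrix.mul_assoc]
  intro i j
  exact h3 ▸ hG i j

/-- Entrywise derivative of the conjugation `Ψ⁻¹ M Ψ` when `Ψ' = A Ψ`. -/
lemma conjEntry (Ψ M : ℂ → Matrix (Fin 2) (Fin 2) ℂ) (A M' : Matrix (Fin 2) (Fin 2) ℂ)
    (x : ℂ)
    (hΨ : ∀ i j, HasDerivAt (fun y => Ψ y i j) ((A * Ψ x) i j) x)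
    (hM : ∀ i j, HasDerivAt (fun y => M y i j) (M' i j) x)
    (hx : IsUnit (Ψ x)) (hnb : ∀ᶠ y in nhds x, IsUnit (Ψ y)) :
    ∀ i j, HasDerivAt (fun y => ((Ψ y)⁻¹ * M y * Ψ y) i j)
      (((Ψ x)⁻¹ * (M' + M x * A - A * M x) * Ψ x) i j) x := by
  have hdu : IsUnit (Ψ x).det := (Matrix.isUnit_iff_isUnit_det _).mp hx
  have hinv0 := invEntry Ψ (A * Ψ x) x hΨ hx hnb
  have e0 : -((Ψ x)⁻¹ * (A * Ψ x) * (Ψ x)⁻¹) = -((Ψ x)⁻¹ * A) := by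
    rw [Matrix.mul_assoc, Matrix.mul_assoc, Matrix.mul_nonsing_inv _ hdu, Matrix.mul_one]
  have hinv' : ∀ i j, HasDerivAt (fun y => (Ψ y)⁻¹ i j) ((-((Ψ x)⁻¹ * A)) i j) x :=
    fun i j => e0 ▸ hinv0 i j
  have step1 : ∀ i j, HasDerivAt (fun y => ((Ψ y)⁻¹ * M y) i j)
      (((-((Ψ x)⁻¹ * A)) * M x + (Ψ x)⁻¹ * M') i j) x :=
    mulEntry _ _ _ _ x hinv' hM
  have step2 := mulEntry (fun y => (Ψ y)⁻¹ * M y) Ψ _ (A * Ψ x) x step1 hΨ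
  intro i j
  have hmat : ((-((Ψ x)⁻¹ * A)) * M x + (Ψ x)⁻¹ * M') * Ψ x
      + ((Ψ x)⁻¹ * M x) * (A * Ψ x)
      = (Ψ x)⁻¹ * (M' + M x * A - A * M x) * Ψ x := by
    noncomm_ring
  rw [show (Ψ x)⁻¹ * (M' + M x * A - A * M x) * Ψ x = _ from hmat.symm]
  exact step2 i j

/-- If `Ψ` solves `Ψ' = ![![0,1],![u,0]]·Ψ` on an open `U ⊆ ℂ` with `Ψ(x)`
invertible and `u` complex-differentiable on `U`, then `Λ = Ψ⁻¹·σ₋·Ψ` is three times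
complex-differentiable (entrywise) on `U` and satisfies `Λ''' − 4·u·Λ' − 2·u'·Λ = 0` on `U`. -/
theorem lambda_satisfies_third_order_equation
    (U : Set ℂ) (hU : IsOpen U)
    (u : ℂ → ℂ) (hu : DifferentiableOn ℂ u U)
    (Ψ : ℂ → Matrix (Fin 2) (Fin 2) ℂ)
    (hΨ : ∀ i j, DifferentiableOn ℂ (fun y => Ψ y i j) U)
    (heq : ∀ x ∈ U, matDeriv Ψ x = !![0, 1; u x, 0] * Ψ x)
    (hinv : ∀ x ∈ U, IsUnit (Ψ x)) :
    (∀ i j, DifferentiableOn ℂ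
      (fun y => ((Ψ y)⁻¹ * sigmaMinus * Ψ y) i j) U) ∧
    (∀ i j, DifferentiableOn ℂ
      (fun y => matDeriv (fun z => (Ψ z)⁻¹ * sigmaMinus * Ψ z) y i j) U) ∧
    (∀ i j, DifferentiableOn ℂ
      (fun y => matDeriv (matDeriv (fun z => (Ψ z)⁻¹ * sigmaMinus * Ψ z)) y i j) U) ∧
    ∀ x ∈ U,
      matDeriv (matDeriv (matDeriv (fun z => (Ψ z)⁻¹ * sigmaMinus * Ψ z))) x
        - (4 * u x) • matDeriv (fun z => (Ψ z)⁻¹ * sigmaMinus * Ψ z) x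
        - (2 * deriv u x) • ((Ψ x)⁻¹ * sigmaMinus * Ψ x) = 0 := by
  have hud : ∀ x ∈ U, HasDerivAt u (deriv u x) x :=
    fun x hx => (hu.differentiableAt (hU.mem_nhds hx)).hasDerivAt
  have hnb : ∀ x ∈ U, ∀ᶠ y in nhds x, IsUnit (Ψ y) :=
    fun x hx => Filter.eventually_of_mem (hU.mem_nhds hx) (fun y hy => hinv y hy)
  have hΨd : ∀ x ∈ U, ∀ i j, HasDerivAt (fun y => Ψ y i j) ((Amat u x * Ψ x) i j) x := by
    intro x hx i j
    have hd := ((hΨ i j).differentiableAt (hU.mem_nhds hx)).hasDerivAt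
    have e : deriv (fun y => Ψ y i j) x = (Amat u x * Ψ x) i j := by
      have := congrFun (congrFun (heq x hx) i) j
      simpa [matDeriv, Amat] using this
    exact e ▸ hd
  -- first derivative
  have h1 : ∀ x ∈ U, ∀ i j, HasDerivAt (fun y => ((Ψ y)⁻¹ * sigmaMinus * Ψ y) i j)
      (((Ψ x)⁻¹ * L1mat * Ψ x) i j) x := by
    intro x hx i j
    have hM : ∀ i j, HasDerivAt (fun _ : ℂ => sigmaMinus i j)
        ((0 : Matrix (Fin 2) (Fin 2) ℂ) i j) x := by
      intro i j; simpa using hasDerivAt_const x (sigmaMinus i j)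
    have h := conjEntry Ψ (fun _ => sigmaMinus) (Amat u x) 0 x (hΨd x hx) hM
      (hinv x hx) (hnb x hx) i j
    have e : (0 : Matrix (Fin 2) (Fin 2) ℂ) + sigmaMinus * Amat u x - Amat u x * sigmaMinus
        = L1mat := by
      ext a b
      fin_cases a <;> fin_cases b <;>
        simp [sigmaMinus, Amat, L1mat, Matrix.mul_apply, Fin.sum_univ_two]
    rw [e] at h
    exact h
  have d1 : ∀ x ∈ U, matDeriv (fun z => (Ψ z)⁻¹ * sigmaMinus * Ψ z) x
      = (Ψ x)⁻¹ * L1mat * Ψ x := by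
    intro x hx
    ext i j
    simp only [matDeriv, Matrix.of_apply]
    exact (h1 x hx i j).deriv
  -- second derivative
  have h2 : ∀ x ∈ U, ∀ i j,
      HasDerivAt (fun y => matDeriv (fun z => (Ψ z)⁻¹ * sigmaMinus * Ψ z) y i j)
      (((Ψ x)⁻¹ * L2mat u x * Ψ x) i j) x := by
    intro x hx i j
    have hM : ∀ i j, HasDerivAt (fun _ : ℂ => L1mat i j)
        ((0 : Matrix (Fin 2) (Fin 2) ℂ) i j) x := by
      intro i j; simpa using hasDerivAt_const x (L1mat i j)
    have h := conjEntry Ψ (fun _ => L1mat) (Amat u x) 0 x (hΨd x hx) hM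
      (hinv x hx) (hnb x hx) i j
    have e : (0 : Matrix (Fin 2) (Fin 2) ℂ) + L1mat * Amat u x - Amat u x * L1mat
        = L2mat u x := by
      ext a b
      fin_cases a <;> fin_cases b <;>
        simp [L1mat, Amat, L2mat, Matrix.mul_apply, Fin.sum_univ_two] <;> ring
    rw [e] at h
    refine h.congr_of_eventuallyEq ?_
    filter_upwards [hU.mem_nhds hx] with y hy
    rw [d1 y hy]
  have d2 : ∀ x ∈ U, matDeriv (matDeriv (fun z => (Ψ z)⁻¹ * sigmaMinus * Ψ z)) x
      = (Ψ x)⁻¹ * L2mat u x * Ψ x := by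
    intro x hx
    ext i j
    simp only [matDeriv, Matrix.of_apply]
    exact (h2 x hx i j).deriv
  -- third derivative
  have h3 : ∀ x ∈ U, ∀ i j,
      HasDerivAt (fun y => matDeriv (matDeriv (fun z => (Ψ z)⁻¹ * sigmaMinus * Ψ z)) y i j)
      (((Ψ x)⁻¹ * L3mat u x * Ψ x) i j) x := by
    intro x hx i j
    have hM : ∀ i j, HasDerivAt (fun y : ℂ => L2mat u y i j)
        ((!![0, 0; 2 * deriv u x, 0] : Matrix (Fin 2) (Fin 2) ℂ) i j) x := by
      intro i j
      fin_cases i <;> fin_cases j <;> simp [L2mat] <;>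
        first
          | exact hasDerivAt_const x _
          | exact (hud x hx).const_mul 2
    have h := conjEntry Ψ (L2mat u) (Amat u x) !![0, 0; 2 * deriv u x, 0] x (hΨd x hx) hM
      (hinv x hx) (hnb x hx) i j
    have e : (!![0, 0; 2 * deriv u x, 0] : Matrix (Fin 2) (Fin 2) ℂ)
        + L2mat u x * Amat u x - Amat u x * L2mat u x = L3mat u x := by
      ext a b
      fin_cases a <;> fin_cases b <;>
        simp [L2mat, Amat, L3mat, Matrix.mul_apply, Fin.sum_univ_two] <;> ring
    rw [e] at h
    refine h.congr_of_eventuallyEq ?_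
    filter_upwards [hU.mem_nhds hx] with y hy
    rw [d2 y hy]
  have d3 : ∀ x ∈ U, matDeriv (matDeriv (matDeriv (fun z => (Ψ z)⁻¹ * sigmaMinus * Ψ z))) x
      = (Ψ x)⁻¹ * L3mat u x * Ψ x := by
    intro x hx
    ext i j
    simp only [matDeriv, Matrix.of_apply]
    exact (h3 x hx i j).deriv
  refine ⟨fun i j x hx => (h1 x hx i j).differentiableAt.differentiableWithinAt,
    fun i j x hx => (h2 x hx i j).differentiableAt.differentiableWithinAt,
    fun i j x hx => (h3 x hx i j).differentiableAt.differentiableWithinAt, ?_⟩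
  intro x hx
  rw [d3 x hx, d1 x hx]
  have key : L3mat u x = (4 * u x) • L1mat + (2 * deriv u x) • sigmaMinus := by
    ext a b
    fin_cases a <;> fin_cases b <;>
      simp [L3mat, L1mat, sigmaMinus, Matrix.smul_apply, smul_eq_mul] <;> ring
  rw [key]
  rw [Matrix.mul_add, Matrix.add_mul, Matrix.mul_smul, Matrix.mul_smul,
    Matrix.smul_mul, Matrix.smul_mul]
  abel
end

section
/- Let m ∈ ℕ, let V ⊆ ℂ × ℂ be open, let A : ℂ × ℂ → Matrix (Fin m) (Fin m) ℂ be continuously ℂ-differentiable on V, and let Φ : ℂ × ℂ → Matrix (Fin m) (Fin m) ℂ be twice continuously ℂ-differentiable on V such that Φ(x,s) is invertible and ∂Φ/∂x(x,s) = A(x,s)·Φ(x,s) for all (x,s) ∈ V, and such that Φ(x₀,s) equals the identity matrix for every s with (x₀,s) ∈ V, where x₀ ∈ ℂ is fixed. Fix s ∈ ℂ and let γ : [0,1] → ℂ be continuously differentiable with γ(0) = x₀ and (γ(r), s) ∈ V for all r ∈ [0,1]. Then Φ(γ(1),s)⁻¹ · ∂Φ/∂s(γ(1),s) = ∫₀¹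 Φ(γ(r),s)⁻¹ · ∂A/∂s(γ(r),s) · Φ(γ(r),s) · γ'(r) dr. -/
open scoped Topology

/-- Entrywise complex partial derivative with respect to the first variable of a
matrix-valued function of two complex variables. -/
noncomputable def pdx {m : ℕ} (F : ℂ × ℂ → Matrix (Fin m) (Fin m) ℂ) (p : ℂ × ℂ) :
    Matrix (Fin m) (Fin m) ℂ :=
  Matrix.of fun i j => deriv (fun z => F (z, p.2) i j) p.1

/-- Entrywise complex partial derivative with respect to the second variable of a
matrix-valued function of two complex variables. -/
noncomputable def pds {m : ℕ} (F : ℂ × ℂ → Matrix (Fin m) (Fin m) ℂ) (p : ℂ × ℂ) :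
    Matrix (Fin m) (Fin m) ℂ :=
  Matrix.of fun i j => deriv (fun z => F (p.1, z) i j) p.2

/-- Entrywise `HasDerivAt` for matrix-valued functions of one complex variable. -/
def MHasDerivAt {m : ℕ} (F : ℂ → Matrix (Fin m) (Fin m) ℂ)
    (F' : Matrix (Fin m) (Fin m) ℂ) (x : ℂ) : Prop :=
  ∀ i j, HasDerivAt (fun z => F z i j) (F' i j) x

lemma MHasDerivAt.mul {m : ℕ} {F G : ℂ → Matrix (Fin m) (Fin m) ℂ}
    {F' G' : Matrix (Fin m) (Fin m) ℂ} {x : ℂ}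
    (hF : MHasDerivAt F F' x) (hG : MHasDerivAt G G' x) :
    MHasDerivAt (fun z => F z * G z) (F' * G x + F x * G') x := by
  intro i j
  have h1 : (fun z => (F z * G z) i j) = fun z => ∑ k, F z i k * G z k j := by
    funext z; simp [Matrix.mul_apply]
  rw [h1]
  have h2 := HasDerivAt.fun_sum (u := (Finset.univ : Finset (Fin m)))
    (A := fun k z => F z i k * G z k j)
    (A' := fun k => F' i k * G x k j + F x i k * G' k j)
    (fun k _ => (hF i k).mul (hG k j))
  have h3 : (F' * G x + F x * G') i j = ∑ k, (F' i k * G x k j + F x i k * G' k j) := by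
    simp [Matrix.mul_apply, Matrix.add_apply, Finset.sum_add_distrib]
  rw [h3]; exact h2

lemma differentiableAt_det_comp {m : ℕ} {M : ℂ → Matrix (Fin m) (Fin m) ℂ} {x : ℂ}
    (h : ∀ i j, DifferentiableAt ℂ (fun z => M z i j) x) :
    DifferentiableAt ℂ (fun z => (M z).det) x := by
  simp only [Matrix.det_apply']
  apply DifferentiableAt.fun_sum
  intro σ _
  exact DifferentiableAt.const_mul
    (DifferentiableAt.fun_finsetProd (fun i _ => h (σ i) i)) _

/-- Partial derivative in the second variable, as slice deriv, equals `fderiv` applied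
to `(0,1)`, for differentiable functions. -/
lemma hasDerivAt_slice_snd {F : ℂ × ℂ → ℂ} {q : ℂ × ℂ}
    (h : DifferentiableAt ℂ F q) :
    HasDerivAt (fun w => F (q.1, w)) (fderiv ℂ F q (0, 1)) q.2 := by
  have hline : HasDerivAt (fun w : ℂ => (q.1, w)) ((0 : ℂ), (1 : ℂ)) q.2 :=
    (hasDerivAt_const _ _).prodMk (hasDerivAt_id _)
  have := h.hasFDerivAt.comp_hasDerivAt q.2 hline
  exact this

lemma hasDerivAt_slice_fst {F : ℂ × ℂ → ℂ} {q : ℂ × ℂ}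
    (h : DifferentiableAt ℂ F q) :
    HasDerivAt (fun z => F (z, q.2)) (fderiv ℂ F q (1, 0)) q.1 := by
  have hline : HasDerivAt (fun z : ℂ => (z, q.2)) ((1 : ℂ), (0 : ℂ)) q.1 :=
    (hasDerivAt_id _).prodMk (hasDerivAt_const _ _)
  have := h.hasFDerivAt.comp_hasDerivAt q.1 hline
  exact this

/-- Clairaut along coordinate slices for `C²` functions on an open set. -/
lemma clairaut_slice {F : ℂ × ℂ → ℂ} {V : Set (ℂ × ℂ)} (hV : IsOpen V)
    (hF : ContDiffOn ℂ 2 F V) {x s : ℂ} (hp : (x, s) ∈ V) :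
    HasDerivAt (fun z => deriv (fun w => F (z, w)) s)
      (deriv (fun w => deriv (fun z => F (z, w)) x) s) x := by
  set p : ℂ × ℂ := (x, s) with hpdef
  have hFat : ContDiffAt ℂ 2 F p := hF.contDiffAt (hV.mem_nhds hp)
  have hf'1 : ContDiffAt ℂ 1 (fderiv ℂ F) p := hFat.fderiv_right (by norm_num)
  have hdiffV : ∀ q ∈ V, DifferentiableAt ℂ F q := fun q hq =>
    (hF.contDiffAt (hV.mem_nhds hq)).differentiableAt two_ne_zero
  have hf'd : DifferentiableAt ℂ (fderiv ℂ F) p := hf'1.differentiableAt one_ne_zero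
  set f'' := fderiv ℂ (fderiv ℂ F) p with hf''def
  have hsymm : f'' (1, 0) (0, 1) = f'' (0, 1) (1, 0) := by
    refine second_derivative_symmetric_of_eventually (f := F) ?_ hf'd.hasFDerivAt _ _
    filter_upwards [hV.mem_nhds hp] with q hq using (hdiffV q hq).hasFDerivAt
  have hg : HasDerivAt (fun z => fderiv ℂ F (z, s) (0, 1)) (f'' (1, 0) (0, 1)) x := by
    have hgF : HasFDerivAt (fun q => fderiv ℂ F q (0, 1))
        ((ContinuousLinearMap.apply ℂ ℂ ((0 : ℂ), (1 : ℂ))).comp f'') p :=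
      (ContinuousLinearMap.apply ℂ ℂ ((0 : ℂ), (1 : ℂ))).hasFDerivAt.comp p
        hf'd.hasFDerivAt
    have hline : HasDerivAt (fun z : ℂ => (z, s)) ((1 : ℂ), (0 : ℂ)) x :=
      (hasDerivAt_id _).prodMk (hasDerivAt_const _ _)
    have := hgF.comp_hasDerivAt x hline
    exact this
  have hev : (fun z => deriv (fun w => F (z, w)) s)
      =ᶠ[𝓝 x] fun z => fderiv ℂ F (z, s) (0, 1) := by
    have hmem : {z : ℂ | (z, s) ∈ V} ∈ 𝓝 x :=
      (hV.preimage (continuous_id.prodMk continuous_const)).mem_nhds hp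
    filter_upwards [hmem] with z hz
    exact (hasDerivAt_slice_snd (hdiffV (z, s) hz)).deriv
  have hL : HasDerivAt (fun z => deriv (fun w => F (z, w)) s) (f'' (1, 0) (0, 1)) x :=
    hg.congr_of_eventuallyEq hev
  have hR : deriv (fun w => deriv (fun z => F (z, w)) x) s = f'' (0, 1) (1, 0) := by
    have hg2 : HasDerivAt (fun w => fderiv ℂ F (x, w) (1, 0)) (f'' (0, 1) (1, 0)) s := by
      have hgF : HasFDerivAt (fun q => fderiv ℂ F q (1, 0))
          ((ContinuousLinearMap.apply ℂ ℂ ((1 : ℂ), (0 : ℂ))).comp f'') p :=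
        (ContinuousLinearMap.apply ℂ ℂ ((1 : ℂ), (0 : ℂ))).hasFDerivAt.comp p
          hf'd.hasFDerivAt
      have hline : HasDerivAt (fun w : ℂ => (x, w)) ((0 : ℂ), (1 : ℂ)) s :=
        (hasDerivAt_const _ _).prodMk (hasDerivAt_id _)
      have := hgF.comp_hasDerivAt s hline
      exact this
    have hev2 : (fun w => deriv (fun z => F (z, w)) x)
        =ᶠ[𝓝 s] fun w => fderiv ℂ F (x, w) (1, 0) := by
      have hmem : {w : ℂ | (x, w) ∈ V} ∈ 𝓝 s :=
        (hV.preimage (continuous_const.prodMk continuous_id)).mem_nhds hp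
      filter_upwards [hmem] with w hw
      exact (hasDerivAt_slice_fst (hdiffV (x, w) hw)).deriv
    exact (hg2.congr_of_eventuallyEq hev2).deriv
  rw [hR, ← hsymm]
  exact hL

/-- Let `Φ` be an invertible solution of `∂Φ/∂x = A·Φ` on an open
`V ⊆ ℂ × ℂ`, with `A` continuously ℂ-differentiable and `Φ` twice continuously
ℂ-differentiable (entrywise) on `V`, normalized by `Φ(x₀, s) = I`. Then for any
continuously differentiable path `γ : [0,1] → ℂ` starting at `x₀` and staying in the
`s`-slice of `V`,
`Φ(γ(1),s)⁻¹·∂Φ/∂s(γ(1),s) = ∫₀¹ Φ(γ(r),s)⁻¹·∂A/∂s(γ(r),s)·Φ(γ(r),s)·γ'(r) dr`. -/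
theorem variation_of_parameters_integrated
    (m : ℕ) (V : Set (ℂ × ℂ)) (hV : IsOpen V)
    (A Φ : ℂ × ℂ → Matrix (Fin m) (Fin m) ℂ)
    (hA : ∀ i j, ContDiffOn ℂ 1 (fun p => A p i j) V)
    (hΦ : ∀ i j, ContDiffOn ℂ 2 (fun p => Φ p i j) V)
    (hinv : ∀ p ∈ V, IsUnit (Φ p))
    (heq : ∀ p ∈ V, pdx Φ p = A p * Φ p)
    (x₀ : ℂ)
    (hnorm : ∀ s : ℂ, (x₀, s) ∈ V → Φ (x₀, s) = 1)
    (s : ℂ) (γ : ℝ → ℂ)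
    (hγ : ContDiffOn ℝ 1 γ (Set.Icc 0 1))
    (hγ0 : γ 0 = x₀)
    (hγV : ∀ r ∈ Set.Icc (0 : ℝ) 1, (γ r, s) ∈ V) :
    (Φ (γ 1, s))⁻¹ * pds Φ (γ 1, s) =
      Matrix.of fun i j =>
        ∫ r in (0 : ℝ)..1,
          ((Φ (γ r, s))⁻¹ * pds A (γ r, s) * Φ (γ r, s)) i j *
            derivWithin γ (Set.Icc 0 1) r := by
  classical
  set U : Set ℂ := {z | (z, s) ∈ V} with hUdef
  have hU : IsOpen U := hV.preimage (continuous_id.prodMk continuous_const)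
  set N : ℂ → Matrix (Fin m) (Fin m) ℂ := fun z => (Φ (z, s))⁻¹ with hNdef
  -- slice regularity
  have hΦslice : ∀ i j, ContDiffOn ℂ 2 (fun z => Φ (z, s) i j) U := fun i j =>
    (hΦ i j).comp ((contDiff_id.prodMk contDiff_const).contDiffOn) (fun z hz => hz)
  have hΦdiff : ∀ i j, ∀ x ∈ U, DifferentiableAt ℂ (fun z => Φ (z, s) i j) x :=
    fun i j x hx =>
      ((hΦslice i j).contDiffAt (hU.mem_nhds hx)).differentiableAt two_ne_zero
  have hdetU : ∀ x ∈ U, IsUnit (Φ (x, s)).det := fun x hx =>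
    (Matrix.isUnit_iff_isUnit_det _).mp (hinv _ hx)
  -- Claim 1 : entrywise derivative of Φ along x
  have hΨ : ∀ x ∈ U, MHasDerivAt (fun z => Φ (z, s)) (A (x, s) * Φ (x, s)) x := by
    intro x hx i j
    have hd := (hΦdiff i j x hx).hasDerivAt
    have hval : deriv (fun z => Φ (z, s) i j) x = (A (x, s) * Φ (x, s)) i j := by
      have h1 : deriv (fun z => Φ (z, s) i j) x = pdx Φ (x, s) i j := rfl
      rw [h1, heq (x, s) hx]
    rwa [hval] at hd
  -- Claim 2 : entrywise derivative of pds Φ along x  (mixed partials)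
  have hderivP : ∀ x ∈ U, MHasDerivAt (fun z => pds Φ (z, s))
      (pds A (x, s) * Φ (x, s) + A (x, s) * pds Φ (x, s)) x := by
    intro x hx i j
    have hcl := clairaut_slice hV (hΦ i j) hx
    have hmem : {w : ℂ | (x, w) ∈ V} ∈ 𝓝 s :=
      (hV.preimage (continuous_const.prodMk continuous_id)).mem_nhds hx
    have hCval : deriv (fun w => deriv (fun z => Φ (z, w) i j) x) s
        = (pds A (x, s) * Φ (x, s) + A (x, s) * pds Φ (x, s)) i j := by
      have hev : (fun w => deriv (fun z => Φ (z, w) i j) x)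
          =ᶠ[𝓝 s] fun w => ∑ k, A (x, w) i k * Φ (x, w) k j := by
        filter_upwards [hmem] with w hw
        have h1 : deriv (fun z => Φ (z, w) i j) x = pdx Φ (x, w) i j := rfl
        rw [h1, heq (x, w) hw, Matrix.mul_apply]
      rw [hev.deriv_eq]
      have hsum : HasDerivAt (fun w => ∑ k, A (x, w) i k * Φ (x, w) k j)
          (∑ k, (pds A (x, s) i k * Φ (x, s) k j + A (x, s) i k * pds Φ (x, s) k j))
          s := by
        apply HasDerivAt.fun_sum
        intro k _
        have hAk : HasDerivAt (fun w => A (x, w) i k) (pds A (x, s) i k) s := by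
          have hd : DifferentiableAt ℂ (fun w => A (x, w) i k) s := by
            have hc : ContDiffOn ℂ 1 (fun w => A (x, w) i k) {w : ℂ | (x, w) ∈ V} :=
              (hA i k).comp ((contDiff_const.prodMk contDiff_id).contDiffOn)
                (fun w hw => hw)
            exact ((hc.contDiffAt hmem).differentiableAt one_ne_zero)
          exact hd.hasDerivAt
        have hΦk : HasDerivAt (fun w => Φ (x, w) k j) (pds Φ (x, s) k j) s := by
          have hd : DifferentiableAt ℂ (fun w => Φ (x, w) k j) s := by
            have hc : ContDiffOn ℂ 2 (fun w => Φ (x, w) k j) {w : ℂ | (x, w) ∈ V} :=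
              (hΦ k j).comp ((contDiff_const.prodMk contDiff_id).contDiffOn)
                (fun w hw => hw)
            exact ((hc.contDiffAt hmem).differentiableAt two_ne_zero)
          exact hd.hasDerivAt
        exact hAk.mul hΦk
      rw [hsum.deriv]
      simp [Matrix.add_apply, Matrix.mul_apply, Finset.sum_add_distrib]
    exact hCval ▸ hcl
  -- differentiability of the inverse, entrywise
  have hNdiff : ∀ i j, ∀ x ∈ U, DifferentiableAt ℂ (fun z => N z i j) x := by
    intro i j x hx
    have hadj : DifferentiableAt ℂ (fun z => (Φ (z, s)).adjugate i j) x := by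
      simp only [Matrix.adjugate_apply]
      apply differentiableAt_det_comp
      intro a b
      have hfun : (fun z => ((Φ (z, s)).updateRow j (Pi.single i 1)) a b)
          = fun z => if a = j then (Pi.single i (1 : ℂ) : Fin m → ℂ) b
              else Φ (z, s) a b := by
        funext z; rw [Matrix.updateRow_apply]
      rw [hfun]
      by_cases hab : a = j
      · simp only [hab, if_true]; exact differentiableAt_const _
      · simp only [hab, if_false]; exact hΦdiff a b x hx
    have hdet : DifferentiableAt ℂ (fun z => (Φ (z, s)).det) x :=
      differentiableAt_det_comp (fun i j => hΦdiff i j x hx)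
    have hfun : (fun z => N z i j)
        = fun z => ((Φ (z, s)).det)⁻¹ * (Φ (z, s)).adjugate i j := by
      funext z
      show (Φ (z, s))⁻¹ i j = (Φ (z, s)).det⁻¹ * (Φ (z, s)).adjugate i j
      rw [Matrix.inv_def, Ring.inverse_eq_inv, Matrix.smul_apply, smul_eq_mul]
    rw [hfun]
    exact (hdet.inv (hdetU x hx).ne_zero).mul hadj
  -- Claim 3 : derivative of the inverse
  have hNderiv : ∀ x ∈ U, MHasDerivAt N (-(N x * A (x, s))) x := by
    intro x hx
    set N₁ : Matrix (Fin m) (Fin m) ℂ :=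
      Matrix.of (fun i j => deriv (fun z => N z i j) x) with hN₁
    have hN1 : MHasDerivAt N N₁ x := fun i j => (hNdiff i j x hx).hasDerivAt
    have hmul : MHasDerivAt (fun z => Φ (z, s) * N z)
        ((A (x, s) * Φ (x, s)) * N x + Φ (x, s) * N₁) x := (hΨ x hx).mul hN1
    have hone : ∀ᶠ z in 𝓝 x, Φ (z, s) * N z = 1 := by
      filter_upwards [hU.mem_nhds hx] with z hz
      exact Matrix.mul_nonsing_inv _ (hdetU z hz)
    have hzero : (A (x, s) * Φ (x, s)) * N x + Φ (x, s) * N₁ = 0 := by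
      ext i j
      have hone' : (fun _ : ℂ => (1 : Matrix (Fin m) (Fin m) ℂ) i j)
          =ᶠ[𝓝 x] fun z => (Φ (z, s) * N z) i j := by
        filter_upwards [hone] with z hz
        rw [hz]
      have huniq := ((hmul i j).congr_of_eventuallyEq hone').unique
        (hasDerivAt_const x _)
      simpa using huniq
    have h2 : Φ (x, s) * N₁ = -((A (x, s) * Φ (x, s)) * N x) :=
      eq_neg_of_add_eq_zero_right (by linear_combination (norm := module) hzero)
    have hN₁eq : N₁ = -(N x * A (x, s)) := by
      calc N₁ = (N x * Φ (x, s)) * N₁ := by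
            rw [Matrix.nonsing_inv_mul _ (hdetU x hx), one_mul]
        _ = N x * (Φ (x, s) * N₁) := by rw [mul_assoc]
        _ = N x * -((A (x, s) * Φ (x, s)) * N x) := by rw [h2]
        _ = -(N x * A (x, s)) := by
            rw [mul_neg]
            congr 1
            calc N x * (A (x, s) * Φ (x, s) * N x)
                = N x * (A (x, s) * (Φ (x, s) * N x)) := by rw [mul_assoc]
              _ = N x * A (x, s) := by
                  rw [Matrix.mul_nonsing_inv _ (hdetU x hx), mul_one]
    exact hN₁eq ▸ hN1
  -- Claim 4 : derivative of N * pds Φ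
  have hG : ∀ x ∈ U, MHasDerivAt (fun z => N z * pds Φ (z, s))
      (N x * pds A (x, s) * Φ (x, s)) x := by
    intro x hx
    have h := (hNderiv x hx).mul (hderivP x hx)
    have E : -(N x * A (x, s)) * pds Φ (x, s)
        + N x * (pds A (x, s) * Φ (x, s) + A (x, s) * pds Φ (x, s))
        = N x * pds A (x, s) * Φ (x, s) := by noncomm_ring
    rw [← E]
    exact h
  -- endpoints
  have h01 : (0 : ℝ) ∈ Set.Icc (0 : ℝ) 1 := by norm_num
  have h11 : (1 : ℝ) ∈ Set.Icc (0 : ℝ) 1 := by norm_num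
  have hγU : ∀ r ∈ Set.Icc (0 : ℝ) 1, γ r ∈ U := fun r hr => hγV r hr
  have hx₀U : x₀ ∈ U := by have := hγV 0 h01; rwa [hγ0] at this
  have hP0 : pds Φ (x₀, s) = 0 := by
    ext i j
    have hmem : {w : ℂ | (x₀, w) ∈ V} ∈ 𝓝 s :=
      (hV.preimage (continuous_const.prodMk continuous_id)).mem_nhds hx₀U
    have hev : (fun w => Φ (x₀, w) i j)
        =ᶠ[𝓝 s] fun _ => (1 : Matrix (Fin m) (Fin m) ℂ) i j := by
      filter_upwards [hmem] with w hw
      rw [hnorm w hw]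
    have hder : deriv (fun w => Φ (x₀, w) i j) s = 0 := by
      rw [hev.deriv_eq]; exact deriv_const _ _
    simpa [pds] using hder
  -- continuity of pds A entries on U
  have hBcont : ∀ i j, ContinuousOn (fun z => pds A (z, s) i j) U := by
    intro i j
    have heq' : ∀ x ∈ U, pds A (x, s) i j
        = fderiv ℂ (fun p => A p i j) (x, s) (0, 1) := by
      intro x hx
      have hd : DifferentiableAt ℂ (fun p => A p i j) (x, s) :=
        ((hA i j).contDiffAt (hV.mem_nhds hx)).differentiableAt one_ne_zero
      exact (hasDerivAt_slice_snd hd).deriv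
    refine ContinuousOn.congr ?_ (fun x hx => heq' x hx)
    intro x hx
    have hf0 : ContDiffAt ℂ 0 (fderiv ℂ (fun p => A p i j)) (x, s) :=
      ((hA i j).contDiffAt (hV.mem_nhds hx)).fderiv_right (by norm_num)
    have hf : ContinuousAt (fderiv ℂ (fun p => A p i j)) (x, s) := hf0.continuousAt
    have hc : ContinuousAt ((fderiv ℂ (fun p => A p i j)) ∘ (fun z : ℂ => (z, s))) x :=
      ContinuousAt.comp (f := fun z : ℂ => (z, s)) hf
        (Continuous.continuousAt (continuous_id.prodMk continuous_const))
    have hc2 : ContinuousAt ((ContinuousLinearMap.apply ℂ ℂ ((0 : ℂ), (1 : ℂ))) ∘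
        ((fderiv ℂ (fun p => A p i j)) ∘ (fun z : ℂ => (z, s)))) x :=
      ((ContinuousLinearMap.apply ℂ ℂ
        ((0 : ℂ), (1 : ℂ))).continuous.continuousAt).comp hc
    exact hc2.continuousWithinAt
  have hNcont : ∀ i j, ContinuousOn (fun z => N z i j) U := fun i j x hx =>
    (hNdiff i j x hx).differentiableWithinAt.continuousWithinAt
  have hΨcont : ∀ i j, ContinuousOn (fun z => Φ (z, s) i j) U := fun i j x hx =>
    (hΦdiff i j x hx).differentiableWithinAt.continuousWithinAt
  -- main entrywise computation via FTC
  ext i j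
  simp only [Matrix.of_apply]
  have hKcont : ContinuousOn (fun z => (N z * pds A (z, s) * Φ (z, s)) i j) U := by
    have hrw : (fun z => (N z * pds A (z, s) * Φ (z, s)) i j)
        = fun z => ∑ k, (∑ l, N z i l * pds A (z, s) l k) * Φ (z, s) k j := by
      funext z; simp [Matrix.mul_apply]
    rw [hrw]
    refine continuousOn_finset_sum _ fun k _ => ContinuousOn.mul ?_ (hΨcont k j)
    exact continuousOn_finset_sum _ fun l _ => (hNcont i l).mul (hBcont l k)
  have key : (∫ r in (0 : ℝ)..1,
        ((Φ (γ r, s))⁻¹ * pds A (γ r, s) * Φ (γ r, s)) i j *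
          derivWithin γ (Set.Icc 0 1) r)
      = (fun r => (N (γ r) * pds Φ (γ r, s)) i j) 1
        - (fun r => (N (γ r) * pds Φ (γ r, s)) i j) 0 := by
    refine intervalIntegral.integral_eq_sub_of_hasDeriv_right_of_le
      (f := fun r => (N (γ r) * pds Φ (γ r, s)) i j)
      (f' := fun r => ((Φ (γ r, s))⁻¹ * pds A (γ r, s) * Φ (γ r, s)) i j *
        derivWithin γ (Set.Icc 0 1) r)
      zero_le_one ?_ ?_ ?_
    · -- continuity of r ↦ (N (γ r) * pds Φ (γ r, s)) i j on Icc
      have hgcont : ContinuousOn (fun z => (N z * pds Φ (z, s)) i j) U :=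
        fun x hx => (hG x hx i j).differentiableAt.continuousAt.continuousWithinAt
      exact hgcont.comp hγ.continuousOn hγU
    · intro r hr
      have hrIcc : r ∈ Set.Icc (0 : ℝ) 1 := Set.Ioo_subset_Icc_self hr
      have hγd : HasDerivAt γ (derivWithin γ (Set.Icc 0 1) r) r := by
        have hd : DifferentiableWithinAt ℝ γ (Set.Icc 0 1) r :=
          (hγ.differentiableOn one_ne_zero) r hrIcc
        exact hd.hasDerivWithinAt.hasDerivAt (Icc_mem_nhds hr.1 hr.2)
      have hgd : HasDerivAt (fun z => (N z * pds Φ (z, s)) i j)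
          ((N (γ r) * pds A (γ r, s) * Φ (γ r, s)) i j) (γ r) :=
        hG (γ r) (hγU r hrIcc) i j
      have hcomp := (hgd.hasFDerivAt.restrictScalars ℝ).comp_hasDerivAt r hγd
      have hmain : HasDerivAt (fun r => (N (γ r) * pds Φ (γ r, s)) i j)
          (((Φ (γ r, s))⁻¹ * pds A (γ r, s) * Φ (γ r, s)) i j *
            derivWithin γ (Set.Icc 0 1) r) r := by
        exact hcomp.congr_deriv (by simp [mul_comm, hNdef])
      exact hmain.hasDerivWithinAt
    · apply ContinuousOn.intervalIntegrable
      rw [Set.uIcc_of_le zero_le_one]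
      exact (hKcont.comp hγ.continuousOn hγU).mul
        (hγ.continuousOn_derivWithin (uniqueDiffOn_Icc one_pos) le_rfl)
  rw [key]
  have h0 : (N (γ 0) * pds Φ (γ 0, s)) i j = 0 := by
    rw [hγ0, hP0, mul_zero, Matrix.zero_apply]
  simp only [h0, sub_zero]
  rfl
end
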